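/- Let p be a prime, L/ℚ_p a finite extension with ring of integers O and maximal ideal m, N ≥ 1 an integer, and χ a Dirichlet character modulo N with values in O^×. Suppose there is no Dirichlet character θ of p-power conductor, valued in O^×, such that χ(c) ≡ θ(c) (mod m) for all integers c coprime to Np. Then for every n ≥ 1 there exists an integer c > 1 with gcd(c, 6Np) = 1, c ≡ 1 (mod pⁿ), and χ(c) ≢ 1 (mod m); in particular χ(c) − 1 ∈ O^× for such c. -/

import Mathlib

lemma aux_core6 : ∀ a b : Fin 6, ¬(2 ∣ (a : ℕ) ∧ 2 ∣ (b : ℕ)) → ¬(3 ∣ (a : ℕ) ∧ 3 ∣ (b : ℕ)) →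
    ∃ t : Fin 6, Nat.Coprime (((a : ℕ) + (t : ℕ) * (b : ℕ)) % 6) 6 := by decide

lemma aux_coprime_six_mod (e : ℕ) (h : Nat.Coprime (e % 6) 6) : Nat.Coprime e 6 := by
  have h1 : Nat.gcd 6 e = Nat.gcd (e % 6) 6 := Nat.gcd_rec 6 e
  have h2 : Nat.gcd e 6 = Nat.gcd 6 e := Nat.gcd_comm e 6
  unfold Nat.Coprime at *
  omega

lemma aux_H6 (x g : ℕ) (hg : 0 < g) (hcop : Nat.Coprime x g) :
    ∃ t : ℕ, 1 < x + t * g ∧ Nat.Coprime (x + t * g) 6 := by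
  have hd : ∀ q : ℕ, q ∣ 6 → q ∣ x % 6 → q ∣ g % 6 → q ∣ 1 := by
    intro q hq hx hg'
    rw [Nat.dvd_mod_iff hq] at hx hg'
    exact hcop ▸ Nat.dvd_gcd hx hg'
  have h2 : ¬(2 ∣ x % 6 ∧ 2 ∣ g % 6) := by
    rintro ⟨a, b⟩; have := hd 2 (by norm_num) a b; omega
  have h3 : ¬(3 ∣ x % 6 ∧ 3 ∣ g % 6) := by
    rintro ⟨a, b⟩; have := hd 3 (by norm_num) a b; omega
  obtain ⟨t0, ht0⟩ := aux_core6 ⟨x % 6, by omega⟩ ⟨g % 6, by omega⟩ (by simpa using h2)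
    (by simpa using h3)
  refine ⟨(t0 : ℕ) + 6, ?_, ?_⟩
  · have : 6 * 1 ≤ ((t0 : ℕ) + 6) * g := Nat.mul_le_mul (by omega) hg
    omega
  · apply aux_coprime_six_mod
    have hmod : (x + ((t0 : ℕ) + 6) * g) % 6 = ((x % 6) + (t0 : ℕ) * (g % 6)) % 6 := by
      have h6 : ((t0 : ℕ) + 6) % 6 = (t0 : ℕ) % 6 := by omega
      conv_lhs => rw [Nat.add_mod, Nat.mul_mod, h6]
      conv_rhs => rw [Nat.add_mod, Nat.mul_mod]
      simp [Nat.mod_mod_of_dvd]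
    rw [hmod]
    simpa using ht0

/-- **Choice of the auxiliary smoothing integer `c`.**
Let `p` be a prime, `L/ℚ_p` a finite extension with ring of integers `O` and maximal ideal `m`
(encoded here: `O` is a local domain, finite as a `ℤ_p`-algebra, with `ℤ_p ↪ O`), `N ≥ 1` an
integer, and `χ` a Dirichlet character modulo `N` with values in `O^×`.  Suppose there is no
Dirichlet character `θ` of `p`-power conductor, valued in `O^×`, such that
`χ(c) ≡ θ(c) (mod m)` for all integers `c` coprime to `Np`.  Then for every `n ≥ 1` there
exists an integer `c > 1` with `gcd(c, 6Np) = 1`, `c ≡ 1 (mod pⁿ)`, and `χ(c) ≢ 1 (mod m)`;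
in particular `χ(c) − 1 ∈ O^×` for such `c`. -/
theorem stmt_9 (p : ℕ) [Fact p.Prime] (O : Type*) [CommRing O] [IsDomain O] [IsLocalRing O]
    [Algebra ℤ_[p] O] [Module.Finite ℤ_[p] O]
    (hinj : Function.Injective (algebraMap ℤ_[p] O))
    (N : ℕ) (hN : 1 ≤ N) (χ : DirichletCharacter O N)
    (hχ : ¬ ∃ (k : ℕ) (θ : DirichletCharacter O (p ^ k)),
        ∀ c : ℕ, Nat.Coprime c (N * p) →
          χ (c : ZMod N) - θ (c : ZMod (p ^ k)) ∈ IsLocalRing.maximalIdeal O)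
    (n : ℕ) (hn : 1 ≤ n) :
    ∃ c : ℕ, 1 < c ∧ Nat.Coprime c (6 * N * p) ∧ (c : ZMod (p ^ n)) = 1 ∧
      χ (c : ZMod N) - 1 ∉ IsLocalRing.maximalIdeal O ∧
      IsUnit (χ (c : ZMod N) - 1) := by
  by_contra hcon
  push_neg at hcon
  -- From the negation: every admissible c has χ(c) ≡ 1 mod m.
  have hC : ∀ c : ℕ, 1 < c → Nat.Coprime c (6 * N * p) → (c : ZMod (p ^ n)) = 1 →
      χ (c : ZMod N) - 1 ∈ IsLocalRing.maximalIdeal O := by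
    intro c h1 h2 h3
    by_contra hm
    have hu : IsUnit (χ (c : ZMod N) - 1) := by
      by_contra hnu
      exact hm ((IsLocalRing.mem_maximalIdeal _).2 hnu)
    exact (hcon c h1 h2 h3 hm) hu
  have hp : p.Prime := Fact.out
  have hp1 : 1 < p := hp.one_lt
  set v : ℕ := N.factorization p with hv
  set M : ℕ := N / p ^ v with hM
  have hNfac : p ^ v * M = N := Nat.ordProj_mul_ordCompl_eq_self N p
  have hN0 : N ≠ 0 := by omega
  have hMpos : 0 < M := Nat.ordCompl_pos p hN0
  have hMp : Nat.Coprime p M := Nat.coprime_ordCompl hp hN0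
  set k : ℕ := n + v with hk
  have hMpk : Nat.Coprime M (p ^ k) := (Nat.Coprime.pow_right _ hMp.symm)
  have hpk_pos : 0 < p ^ k := Nat.pow_pos (by omega)
  have hg_pos : 0 < M * p ^ k := Nat.mul_pos hMpos hpk_pos
  haveI : NeZero (M * p ^ k) := ⟨by omega⟩
  have hNdvd : N ∣ M * p ^ k := by
    refine ⟨p ^ n, ?_⟩
    rw [← hNfac, hk, pow_add]
    ring
  have hNpdvd : N * p ∣ M * p ^ k := by
    refine ⟨p ^ (n - 1), ?_⟩
    rw [← hNfac, hk, show n + v = v + ((n - 1) + 1) by omega, pow_add, pow_succ]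
    ring
  have hpdvd : p ∣ M * p ^ k := dvd_mul_of_dvd_right (dvd_pow_self p (by omega)) M
  set crt := ZMod.chineseRemainder hMpk with hcrt
  -- Key congruence lemma.
  have key : ∀ a b : ℕ, Nat.Coprime a (N * p) → Nat.Coprime b (N * p) →
      ((a : ZMod (p ^ k)) = (b : ZMod (p ^ k))) →
      χ (a : ZMod N) - χ (b : ZMod N) ∈ IsLocalRing.maximalIdeal O := by
    intro a b ha hb hab
    have hMdvdN : M ∣ N := ⟨p ^ v, by rw [← hNfac]; ring⟩
    have haM : Nat.Coprime a M := ha.coprime_dvd_right (hMdvdN.trans (dvd_mul_right N p))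
    have hbM : Nat.Coprime b M := hb.coprime_dvd_right (hMdvdN.trans (dvd_mul_right N p))
    set ua : (ZMod M)ˣ := ZMod.unitOfCoprime a haM with hua
    set ub : (ZMod M)ˣ := ZMod.unitOfCoprime b hbM with hub
    set u : (ZMod M)ˣ := ua * ub⁻¹ with hu
    set Y : (ZMod (M * p ^ k))ˣ :=
      Units.map crt.symm.toRingHom.toMonoidHom (MulEquiv.prodUnits.symm (u, 1)) with hY
    set e0 : ℕ := (Y : ZMod (M * p ^ k)).val with he0
    have hYcast : ((Y : ZMod (M * p ^ k)) : ZMod (M * p ^ k)) = crt.symm ((u : ZMod M), 1) := by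
      rw [hY]
      rfl
    have he0cast : (e0 : ZMod (M * p ^ k)) = crt.symm ((u : ZMod M), 1) := by
      rw [he0, ZMod.natCast_zmod_val]
      exact hYcast
    have he0crt : crt (e0 : ZMod (M * p ^ k)) = ((u : ZMod M), 1) := by
      rw [he0cast]
      exact crt.apply_symm_apply _
    have hcrtnat : ∀ m : ℕ, crt (m : ZMod (M * p ^ k)) = ((m : ZMod M), (m : ZMod (p ^ k))) := by
      intro m
      rw [map_natCast]
      rfl
    have he0M : (e0 : ZMod M) = (u : ZMod M) := by
      have := he0crt
      rw [hcrtnat e0] at this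
      exact (Prod.mk.injEq _ _ _ _ ▸ this).1
    have he0pk : (e0 : ZMod (p ^ k)) = 1 := by
      have := he0crt
      rw [hcrtnat e0] at this
      exact (Prod.mk.injEq _ _ _ _ ▸ this).2
    have hcop0 : Nat.Coprime e0 (M * p ^ k) := ZMod.val_coe_unit_coprime Y
    obtain ⟨t, ht1, ht6⟩ := aux_H6 e0 (M * p ^ k) hg_pos hcop0
    set e : ℕ := e0 + t * (M * p ^ k) with he
    have hecast : (e : ZMod (M * p ^ k)) = (e0 : ZMod (M * p ^ k)) := by
      rw [he, Nat.cast_add, Nat.cast_mul, ZMod.natCast_self, mul_zero, add_zero]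
    have hcope : Nat.Coprime e (M * p ^ k) := (Nat.coprime_add_mul_right_left e0 _ t).2 hcop0
    have heM : (e : ZMod M) = (u : ZMod M) := by
      have := congrArg (ZMod.castHom (dvd_mul_right M (p ^ k)) (ZMod M)) hecast
      rwa [map_natCast, map_natCast, he0M] at this
    have hepk : (e : ZMod (p ^ k)) = 1 := by
      have := congrArg (ZMod.castHom (dvd_mul_left (p ^ k) M) (ZMod (p ^ k))) hecast
      rwa [map_natCast, map_natCast, he0pk] at this
    have hepn : (e : ZMod (p ^ n)) = 1 := by
      have := congrArg (ZMod.castHom (pow_dvd_pow p (show n ≤ k by omega)) (ZMod (p ^ n))) hepk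
      rwa [map_natCast, map_one] at this
    have hcope6 : Nat.Coprime e (6 * N * p) := by
      rw [Nat.coprime_mul_iff_right, Nat.coprime_mul_iff_right]
      exact ⟨⟨ht6, hcope.coprime_dvd_right hNdvd⟩, hcope.coprime_dvd_right hpdvd⟩
    have hkey1 : χ ((e : ZMod N)) - 1 ∈ IsLocalRing.maximalIdeal O := hC e ht1 hcope6 hepn
    -- e * b ≡ a mod N
    have hebM : ((e * b : ℕ) : ZMod M) = (a : ZMod M) := by
      push_cast
      rw [heM]
      have hbu : (b : ZMod M) = (ub : ZMod M) := (ZMod.coe_unitOfCoprime b hbM).symm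
      have hau : (a : ZMod M) = (ua : ZMod M) := (ZMod.coe_unitOfCoprime a haM).symm
      rw [hbu, hau, hu]
      push_cast
      rw [mul_assoc]
      norm_cast
      rw [inv_mul_cancel]
      simp
    have hebpk : ((e * b : ℕ) : ZMod (p ^ k)) = (a : ZMod (p ^ k)) := by
      push_cast
      rw [hepk, one_mul, hab]
    have hebbig : ((e * b : ℕ) : ZMod (M * p ^ k)) = (a : ZMod (M * p ^ k)) := by
      apply crt.injective
      rw [hcrtnat, hcrtnat, hebM, hebpk]
    have hebN : ((e * b : ℕ) : ZMod N) = (a : ZMod N) := by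
      have := congrArg (ZMod.castHom hNdvd (ZMod N)) hebbig
      rwa [map_natCast, map_natCast] at this
    have hmul : χ (a : ZMod N) = χ (e : ZMod N) * χ (b : ZMod N) := by
      rw [← hebN]
      push_cast
      rw [map_mul]
    have : χ (a : ZMod N) - χ (b : ZMod N) = χ (b : ZMod N) * (χ (e : ZMod N) - 1) := by
      rw [hmul]; ring
    rw [this]
    exact Ideal.mul_mem_left _ _ hkey1
  -- Build the character θ of p-power conductor contradicting hχ.
  apply hχ
  set ι : (ZMod (p ^ k))ˣ →* Oˣ :=
    χ.toUnitHom.comp ((Units.map (ZMod.castHom hNdvd (ZMod N)).toMonoidHom).comp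
      ((Units.map crt.symm.toRingHom.toMonoidHom).comp
        (MulEquiv.prodUnits.symm.toMonoidHom.comp
          (MonoidHom.inr (ZMod M)ˣ (ZMod (p ^ k))ˣ)))) with hι
  refine ⟨k, MulChar.ofUnitHom ι, ?_⟩
  intro c hc
  have hcp : Nat.Coprime c p := hc.coprime_dvd_right (dvd_mul_left p N)
  have hcpk : Nat.Coprime c (p ^ k) := hcp.pow_right k
  set uc : (ZMod (p ^ k))ˣ := ZMod.unitOfCoprime c hcpk with huc
  have hcu : (c : ZMod (p ^ k)) = (uc : ZMod (p ^ k)) := (ZMod.coe_unitOfCoprime c hcpk).symm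
  set W : (ZMod (M * p ^ k))ˣ :=
    Units.map crt.symm.toRingHom.toMonoidHom (MulEquiv.prodUnits.symm (1, uc)) with hW
  set d : ℕ := (W : ZMod (M * p ^ k)).val with hd
  have hWcast : ((W : ZMod (M * p ^ k)) : ZMod (M * p ^ k)) = crt.symm (1, (uc : ZMod (p ^ k))) := by
    rw [hW]
    rfl
  have hdcast : (d : ZMod (M * p ^ k)) = crt.symm (1, (uc : ZMod (p ^ k))) := by
    rw [hd, ZMod.natCast_zmod_val]
    exact hWcast
  have hcrtnat : ∀ m : ℕ, crt (m : ZMod (M * p ^ k)) = ((m : ZMod M), (m : ZMod (p ^ k))) := by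
    intro m
    rw [map_natCast]
    rfl
  have hdcrt : crt (d : ZMod (M * p ^ k)) = (1, (uc : ZMod (p ^ k))) := by
    rw [hdcast]
    exact crt.apply_symm_apply _
  have hdpk : (d : ZMod (p ^ k)) = (uc : ZMod (p ^ k)) := by
    have := hdcrt
    rw [hcrtnat d] at this
    exact (Prod.mk.injEq _ _ _ _ ▸ this).2
  have hdNp : Nat.Coprime d (N * p) :=
    (ZMod.val_coe_unit_coprime W).coprime_dvd_right hNpdvd
  have hθval : MulChar.ofUnitHom ι (c : ZMod (p ^ k)) = χ (d : ZMod N) := by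
    rw [hcu, MulChar.ofUnitHom_coe]
    have h1 : ι uc = χ.toUnitHom (Units.map (ZMod.castHom hNdvd (ZMod N)).toMonoidHom W) := rfl
    rw [h1, MulChar.coe_toUnitHom]
    congr 1
    have h2 : ((Units.map (ZMod.castHom hNdvd (ZMod N)).toMonoidHom W : (ZMod N)ˣ) : ZMod N) =
        ZMod.castHom hNdvd (ZMod N) (W : ZMod (M * p ^ k)) := rfl
    rw [h2, ← ZMod.natCast_zmod_val (W : ZMod (M * p ^ k)), map_natCast]
  have hkeyc := key c d hc hdNp (by rw [hcu, hdpk])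
  rw [hθval]
  exact hkeyc
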